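/- Let H be a subgroup of the affine general linear group AGL(1, F_q) (the group of maps x ↦ ax + b with a ∈ F_q*, b ∈ F_q, under composition). For any α ∈ F_q, the polynomial g(x) = ∏_{f ∈ H} (x − f(α)) is constant on the orbits of H acting on F_q; that is, for any β ∈ F_q and any θ ∈ H, g(θ(β)) = g(β). -/

import Mathlib

open Polynomial

/-- Let `H` be a subgroup of `AGL(1, F_q)` (realized as the group of affine
equivalences `F ≃ᵃ[F] F`, i.e. maps `x ↦ a x + b` with `a ≠ 0`). For any `α ∈ F_q`, the
polynomial `g(x) = ∏_{f ∈ H} (x − f(α))` is constant on the orbits of `H` acting on `F_q`: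
for any `β` and `θ ∈ H`, `g(θ(β)) = g(β)`. -/
theorem stmt_0 (F : Type) [Field F] [Fintype F]
    (H : Subgroup (F ≃ᵃ[F] F)) [Fintype H] (α : F) :
    ∀ β : F, ∀ θ ∈ H,
      (∏ f : H, (X - C ((f : F ≃ᵃ[F] F) α))).eval (θ β)
        = (∏ f : H, (X - C ((f : F ≃ᵃ[F] F) α))).eval β := by
  intro β θ hθ
  set t : H := ⟨θ, hθ⟩ with ht
  -- linear coefficient hom
  let φ : (F ≃ᵃ[F] F) →* F :=
    { toFun := fun f => (f : F ≃ᵃ[F] F).linear 1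
      map_one' := rfl
      map_mul' := by
        intro f g
        show (f.linear) ((g : F ≃ᵃ[F] F).linear 1) = _
        have : (g : F ≃ᵃ[F] F).linear 1 = ((g : F ≃ᵃ[F] F).linear 1) • (1 : F) := by
          simp
        rw [this, map_smul]
        simp [mul_comm] }
  have hdiff : ∀ x y : F, θ x - θ y = φ θ * (x - y) := by
    intro x y
    have h1 : θ.linear (x - y) = θ x - θ y := by
      simpa using ((θ : F →ᵃ[F] F).linearMap_vsub x y)
    have h2 : θ.linear (x - y) = (x - y) • θ.linear 1 := by
      rw [← map_smul]; simp
    rw [← h1, h2]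
    simp [φ, mul_comm]
    exact Or.inl rfl
  have hpow : (φ θ) ^ Fintype.card H = 1 := by
    have h := pow_card_eq_one (G := H) (x := t)
    have h2 : ((t : F ≃ᵃ[F] F)) ^ Fintype.card H = 1 := by
      calc ((t : F ≃ᵃ[F] F)) ^ Fintype.card H
          = ((t ^ Fintype.card H : H) : F ≃ᵃ[F] F) := by
            rw [SubgroupClass.coe_pow]
        _ = 1 := by rw [h]; rfl
    rw [← map_pow]
    have : θ = (t : F ≃ᵃ[F] F) := rfl
    rw [this, h2, map_one]
  simp only [eval_prod, eval_sub, eval_X, eval_C]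
  calc ∏ f : H, (θ β - (f : F ≃ᵃ[F] F) α)
      = ∏ f : H, (θ β - ((t * f : H) : F ≃ᵃ[F] F) α) := by
        refine (Fintype.prod_equiv (Equiv.mulLeft t) _ _ ?_).symm
        intro f; rfl
    _ = ∏ f : H, (φ θ * (β - (f : F ≃ᵃ[F] F) α)) := by
        refine Finset.prod_congr rfl fun f _ => ?_
        have : ((t * f : H) : F ≃ᵃ[F] F) α = θ ((f : F ≃ᵃ[F] F) α) := rfl
        rw [this, hdiff]
    _ = (φ θ) ^ Fintype.card H * ∏ f : H, (β - (f : F ≃ᵃ[F] F) α) := by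
        rw [Finset.prod_mul_distrib]
        simp [Finset.prod_const, Finset.card_univ]
    _ = ∏ f : H, (β - (f : F ≃ᵃ[F] F) α) := by rw [hpow, one_mul]
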